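/- Let $G$, $H$ be finite groups, $A$ an abelian group, $K \trianglelefteq G$ and $L \trianglelefteq H$ with $\kappa: K \to A$, $\lambda: L \to A$ faithful $G$-stable (resp. $H$-stable) homomorphisms (so $K \le Z(G)$, $L \le Z(H)$). Let $\alpha \in Z^2(G/K, K)$ and $\beta \in Z^2(H/L, L)$ describe the central extensions $1\to K\to G\to G/K\to 1$ and $1\to L\to H\to H/L\to 1$. Then the following are equivalent: (i) there exists $U \le G \times H$ and a homomorphism $\phi : U \to A$ with $p_1(U)=G$, $p_2(U)=H$, $k_1(U)=K$, $k_2(U)=L$, $\phi_1 = \kappa$, $\phi_2 = \lambda$; (ii) there exists an isomorphism $\eta : H/L \to G/K$ such that $[\kappa\circ\alpha] = [\lambda\circ\beta\circ(\eta^{-1}\times\eta^{-1})]$ in $H^2(G/K, \mathrm{tor}\,A)$. -/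
import Mathlib


def k1 {G H : Type*} [Group G] [Group H] (U : Subgroup (G × H)) : Subgroup G :=
  U.comap (MonoidHom.inl G H)

def k2 {G H : Type*} [Group G] [Group H] (U : Subgroup (G × H)) : Subgroup H :=
  U.comap (MonoidHom.inr G H)

def p1 {G H : Type*} [Group G] [Group H] (U : Subgroup (G × H)) : Subgroup G :=
  U.map (MonoidHom.fst G H)

def p2 {G H : Type*} [Group G] [Group H] (U : Subgroup (G × H)) : Subgroup H :=
  U.map (MonoidHom.snd G H)

/-- A 2-cocycle condition (for trivial actions). -/
def IsCocycle {Q B : Type*} [Group Q] [Group B] (α : Q → Q → B) : Prop :=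
  ∀ x y z, α x y * α (x * y) z = α y z * α x (y * z)

/-- A cocycle `α ∈ Z²(G/K, K)` describes the central extension `1 → K → G → G/K → 1` if
there is a section `σ` of the quotient map with `σ(x) σ(y) = α(x,y) σ(xy)`. -/
def Describes {G : Type*} [Group G] (K : Subgroup G) [K.Normal]
    (α : G ⧸ K → G ⧸ K → K) : Prop :=
  ∃ σ : G ⧸ K → G, (∀ x, (QuotientGroup.mk (σ x) : G ⧸ K) = x) ∧
    ∀ x y, σ x * σ y = (α x y : G) * σ (x * y)

section Aux

variable {G H A : Type*} [Group G] [Group H] [CommGroup A]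

/-- The element `g σ(gK)⁻¹` lies in `K`. -/
private lemma mem_kp {G : Type*} [Group G] (K : Subgroup G) [K.Normal]
    (σ : G ⧸ K → G) (hσ : ∀ x, (QuotientGroup.mk (σ x) : G ⧸ K) = x) (g : G) :
    g * (σ (QuotientGroup.mk g))⁻¹ ∈ K := by
  have : (QuotientGroup.mk (g * (σ (QuotientGroup.mk g))⁻¹) : G ⧸ K) = 1 := by
    rw [QuotientGroup.mk_mul, QuotientGroup.mk_inv, hσ, mul_inv_cancel]
  exact (QuotientGroup.eq_one_iff _).mp this

/-- The function underlying the homomorphism `φ` constructed in (ii) ⇒ (i). -/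
private def linkF (K : Subgroup G) (L : Subgroup H) [K.Normal] [L.Normal]
    (κ : K →* A) (lam : L →* A) (σ : G ⧸ K → G) (τ : H ⧸ L → H) (μ : G ⧸ K → A)
    (hσ1 : ∀ x, (QuotientGroup.mk (σ x) : G ⧸ K) = x)
    (hτ1 : ∀ x, (QuotientGroup.mk (τ x) : H ⧸ L) = x)
    (g : G) (h : H) : A :=
  κ ⟨g * (σ (QuotientGroup.mk g))⁻¹, mem_kp K σ hσ1 g⟩ *
    (lam ⟨h * (τ (QuotientGroup.mk h))⁻¹, mem_kp L τ hτ1 h⟩)⁻¹ *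
    μ (QuotientGroup.mk g)

private lemma commAux {A : Type*} [CommGroup A] (a a' b b' l m m' mm : A) :
    a * (a' * (l * m * m' * mm⁻¹)) * (b * (b' * l))⁻¹ * mm
      = a * b⁻¹ * m * (a' * b'⁻¹ * m') := by
  apply Additive.ofMul.injective
  simp only [ofMul_mul, ofMul_inv]
  abel

private lemma keyG {K : Subgroup G} [K.Normal] {α : G ⧸ K → G ⧸ K → K}
    {σ : G ⧸ K → G} (hσ1 : ∀ x, (QuotientGroup.mk (σ x) : G ⧸ K) = x)
    (hσ2 : ∀ x y, σ x * σ y = (α x y : G) * σ (x * y))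
    (hKc : ∀ (g u : G), u ∈ K → g * u = u * g) (g g' : G) :
    g * g' * (σ (QuotientGroup.mk (g * g')))⁻¹
      = (g * (σ (QuotientGroup.mk g))⁻¹) *
        ((g' * (σ (QuotientGroup.mk g'))⁻¹) *
          (α (QuotientGroup.mk g) (QuotientGroup.mk g') : G)) := by
  have hmk : (QuotientGroup.mk (g * g') : G ⧸ K)
      = QuotientGroup.mk g * QuotientGroup.mk g' := rfl
  set x := (QuotientGroup.mk g : G ⧸ K)
  set x' := (QuotientGroup.mk g' : G ⧸ K)
  have hc : σ (x * x') = (α x x' : G)⁻¹ * (σ x * σ x') := by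
    rw [hσ2]; group
  have hcomm : g' * (σ x')⁻¹ * (σ x)⁻¹ = (σ x)⁻¹ * (g' * (σ x')⁻¹) :=
    (hKc ((σ x)⁻¹) _ (mem_kp K σ hσ1 g')).symm
  rw [hmk, hc]
  calc g * g' * ((α x x' : G)⁻¹ * (σ x * σ x'))⁻¹
      = g * (g' * (σ x')⁻¹ * (σ x)⁻¹) * (α x x' : G) := by group
    _ = g * ((σ x)⁻¹ * (g' * (σ x')⁻¹)) * (α x x' : G) := by rw [hcomm]
    _ = g * (σ x)⁻¹ * ((g' * (σ x')⁻¹) * (α x x' : G)) := by group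

private lemma linkF_mul (K : Subgroup G) (L : Subgroup H) [K.Normal] [L.Normal]
    (κ : K →* A) (lam : L →* A)
    (α : G ⧸ K → G ⧸ K → K) (β : H ⧸ L → H ⧸ L → L)
    (σ : G ⧸ K → G) (τ : H ⧸ L → H) (μ : G ⧸ K → A)
    (hσ1 : ∀ x, (QuotientGroup.mk (σ x) : G ⧸ K) = x)
    (hτ1 : ∀ x, (QuotientGroup.mk (τ x) : H ⧸ L) = x)
    (hσ2 : ∀ x y, σ x * σ y = (α x y : G) * σ (x * y))
    (hτ2 : ∀ x y, τ x * τ y = (β x y : H) * τ (x * y))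
    (hKc : ∀ (g u : G), u ∈ K → g * u = u * g)
    (hLc : ∀ (h u : H), u ∈ L → h * u = u * h)
    (η : (H ⧸ L) ≃* (G ⧸ K))
    (hrel : ∀ x y, (κ (α x y) : A) =
      lam (β (η.symm x) (η.symm y)) * μ x * μ y * (μ (x * y))⁻¹)
    (g g' : G) (h h' : H)
    (hgh : (QuotientGroup.mk h : H ⧸ L) = η.symm (QuotientGroup.mk g))
    (hgh' : (QuotientGroup.mk h' : H ⧸ L) = η.symm (QuotientGroup.mk g')) :
    linkF K L κ lam σ τ μ hσ1 hτ1 (g * g') (h * h')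
      = linkF K L κ lam σ τ μ hσ1 hτ1 g h * linkF K L κ lam σ τ μ hσ1 hτ1 g' h' := by
  unfold linkF
  have e2 : (⟨g * g' * (σ (QuotientGroup.mk (g * g')))⁻¹, mem_kp K σ hσ1 (g * g')⟩ : K)
      = ⟨g * (σ (QuotientGroup.mk g))⁻¹, mem_kp K σ hσ1 g⟩ *
        (⟨g' * (σ (QuotientGroup.mk g'))⁻¹, mem_kp K σ hσ1 g'⟩ *
          α (QuotientGroup.mk g) (QuotientGroup.mk g')) :=
    Subtype.ext (keyG hσ1 hσ2 hKc g g')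
  have e3 : (⟨h * h' * (τ (QuotientGroup.mk (h * h')))⁻¹, mem_kp L τ hτ1 (h * h')⟩ : L)
      = ⟨h * (τ (QuotientGroup.mk h))⁻¹, mem_kp L τ hτ1 h⟩ *
        (⟨h' * (τ (QuotientGroup.mk h'))⁻¹, mem_kp L τ hτ1 h'⟩ *
          β (QuotientGroup.mk h) (QuotientGroup.mk h')) :=
    Subtype.ext (keyG hτ1 hτ2 hLc h h')
  rw [e2, e3, map_mul, map_mul, map_mul, map_mul]
  rw [show (QuotientGroup.mk (g * g') : G ⧸ K)
    = QuotientGroup.mk g * QuotientGroup.mk g' from rfl]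
  have hβrw : lam (β (QuotientGroup.mk h) (QuotientGroup.mk h'))
      = lam (β (η.symm (QuotientGroup.mk g)) (η.symm (QuotientGroup.mk g'))) := by
    rw [hgh, hgh']
  rw [hβrw, hrel (QuotientGroup.mk g) (QuotientGroup.mk g')]
  exact commAux _ _ _ _ _ _ _ _

private lemma linkF_left (K : Subgroup G) (L : Subgroup H) [K.Normal] [L.Normal]
    (κ : K →* A) (lam : L →* A)
    (α : G ⧸ K → G ⧸ K → K) (β : H ⧸ L → H ⧸ L → L)
    (σ : G ⧸ K → G) (τ : H ⧸ L → H) (μ : G ⧸ K → A)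
    (hσ1 : ∀ x, (QuotientGroup.mk (σ x) : G ⧸ K) = x)
    (hτ1 : ∀ x, (QuotientGroup.mk (τ x) : H ⧸ L) = x)
    (hσ1K : σ 1 = (α 1 1 : G)) (hτ1L : τ 1 = (β 1 1 : H))
    (hrel11 : (κ (α 1 1) : A) = lam (β 1 1) * μ 1)
    (g : G) (hg : g ∈ K) :
    linkF K L κ lam σ τ μ hσ1 hτ1 g 1 = κ ⟨g, hg⟩ := by
  unfold linkF
  have hmk : (QuotientGroup.mk g : G ⧸ K) = 1 := (QuotientGroup.eq_one_iff g).mpr hg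
  have eK : (⟨g * (σ (QuotientGroup.mk g))⁻¹, mem_kp K σ hσ1 g⟩ : K)
      = ⟨g, hg⟩ * (α 1 1)⁻¹ := by
    apply Subtype.ext
    show g * (σ (QuotientGroup.mk g))⁻¹ = g * (α 1 1 : G)⁻¹
    rw [hmk, hσ1K]
  have eL : (⟨(1 : H) * (τ (QuotientGroup.mk (1 : H)))⁻¹,
        mem_kp L τ hτ1 (1 : H)⟩ : L) = (β 1 1)⁻¹ := by
    apply Subtype.ext
    show (1 : H) * (τ (QuotientGroup.mk (1 : H)))⁻¹ = (β 1 1 : H)⁻¹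
    rw [one_mul, QuotientGroup.mk_one, hτ1L]
  rw [eK, eL, hmk, map_mul, map_inv, map_inv, hrel11]
  simp [mul_comm, mul_left_comm, mul_assoc]

private lemma linkF_right (K : Subgroup G) (L : Subgroup H) [K.Normal] [L.Normal]
    (κ : K →* A) (lam : L →* A)
    (α : G ⧸ K → G ⧸ K → K) (β : H ⧸ L → H ⧸ L → L)
    (σ : G ⧸ K → G) (τ : H ⧸ L → H) (μ : G ⧸ K → A)
    (hσ1 : ∀ x, (QuotientGroup.mk (σ x) : G ⧸ K) = x)
    (hτ1 : ∀ x, (QuotientGroup.mk (τ x) : H ⧸ L) = x)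
    (hσ1K : σ 1 = (α 1 1 : G)) (hτ1L : τ 1 = (β 1 1 : H))
    (hrel11 : (κ (α 1 1) : A) = lam (β 1 1) * μ 1)
    (h : H) (hh : h ∈ L) :
    (linkF K L κ lam σ τ μ hσ1 hτ1 1 h)⁻¹ = lam ⟨h, hh⟩ := by
  have : linkF K L κ lam σ τ μ hσ1 hτ1 1 h = (lam ⟨h, hh⟩)⁻¹ := by
    unfold linkF
    have hmk : (QuotientGroup.mk h : H ⧸ L) = 1 := (QuotientGroup.eq_one_iff h).mpr hh
    have eK : (⟨(1 : G) * (σ (QuotientGroup.mk (1 : G)))⁻¹,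
          mem_kp K σ hσ1 (1 : G)⟩ : K) = (α 1 1)⁻¹ := by
      apply Subtype.ext
      show (1 : G) * (σ (QuotientGroup.mk (1 : G)))⁻¹ = (α 1 1 : G)⁻¹
      rw [one_mul, QuotientGroup.mk_one, hσ1K]
    have eL : (⟨h * (τ (QuotientGroup.mk h))⁻¹, mem_kp L τ hτ1 h⟩ : L)
        = ⟨h, hh⟩ * (β 1 1)⁻¹ := by
      apply Subtype.ext
      show h * (τ (QuotientGroup.mk h))⁻¹ = h * (β 1 1 : H)⁻¹
      rw [hmk, hτ1L]
    rw [eK, eL, QuotientGroup.mk_one, map_mul, map_inv, map_inv, hrel11]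
    simp [mul_comm, mul_left_comm, mul_assoc]
  rw [this, inv_inv]

end Aux

/-- Proposition 5.3 (linkage criterion): for finite groups `G`, `H`, normal subgroups
`K ⊴ G`, `L ⊴ H` with faithful `G`- resp. `H`-stable homomorphisms `κ : K → A`,
`λ : L → A`, and cocycles `α`, `β` describing the central extensions, the following are
equivalent: (i) there is a pair `(U, φ)` with `l(U,φ) = (G,K,κ)` and `r(U,φ) = (H,L,λ)`;
(ii) there is an isomorphism `η : H/L → G/K` with
`[κ∘α] = [λ∘β∘(η⁻¹ × η⁻¹)]` in `H²(G/K, tor A)`. -/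
theorem linkage_criterion {G H A : Type*} [Group G] [Group H] [CommGroup A]
    [Finite G] [Finite H]
    (K : Subgroup G) (L : Subgroup H) [hKn : K.Normal] [hLn : L.Normal]
    (κ : K →* A) (lam : L →* A)
    (hκinj : Function.Injective κ) (hlaminj : Function.Injective lam)
    (hκst : ∀ (g : G) (k : K), κ ⟨g * k * g⁻¹, hKn.conj_mem k k.2 g⟩ = κ k)
    (hlamst : ∀ (h : H) (l : L), lam ⟨h * l * h⁻¹, hLn.conj_mem l l.2 h⟩ = lam l)
    (α : G ⧸ K → G ⧸ K → K) (β : H ⧸ L → H ⧸ L → L)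
    (hα : IsCocycle α) (hβ : IsCocycle β)
    (hαd : Describes K α) (hβd : Describes L β) :
    (∃ (U : Subgroup (G × H)) (φ : U →* A),
        p1 U = ⊤ ∧ p2 U = ⊤ ∧ k1 U = K ∧ k2 U = L ∧
        (∀ (g : G) (hg : g ∈ K) (hu : (g, (1 : H)) ∈ U),
          φ ⟨(g, 1), hu⟩ = κ ⟨g, hg⟩) ∧
        (∀ (h : H) (hh : h ∈ L) (hu : ((1 : G), h) ∈ U),
          (φ ⟨(1, h), hu⟩)⁻¹ = lam ⟨h, hh⟩))
    ↔
    (∃ η : (H ⧸ L) ≃* (G ⧸ K), ∃ μ : G ⧸ K → A,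
        (∀ x, μ x ∈ CommGroup.torsion A) ∧
        ∀ x y, (κ (α x y) : A) =
          lam (β (η.symm x) (η.symm y)) * μ x * μ y * (μ (x * y))⁻¹) := by
  obtain ⟨σ, hσ1, hσ2⟩ := hαd
  obtain ⟨τ, hτ1, hτ2⟩ := hβd
  have hKc : ∀ (g u : G), u ∈ K → g * u = u * g := by
    intro g u hu
    have h2 : g * u * g⁻¹ = u := congrArg Subtype.val (hκinj (hκst g ⟨u, hu⟩))
    calc g * u = (g * u * g⁻¹) * g := by group
      _ = u * g := by rw [h2]
  have hLc : ∀ (h u : H), u ∈ L → h * u = u * h := by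
    intro h u hu
    have h2 : h * u * h⁻¹ = u := congrArg Subtype.val (hlaminj (hlamst h ⟨u, hu⟩))
    calc h * u = (h * u * h⁻¹) * h := by group
      _ = u * h := by rw [h2]
  have hσ1K : σ 1 = (α 1 1 : G) := by
    have h := hσ2 1 1
    rw [one_mul] at h
    exact mul_right_cancel h
  have hτ1L : τ 1 = (β 1 1 : H) := by
    have h := hτ2 1 1
    rw [one_mul] at h
    exact mul_right_cancel h
  constructor
  · -- (i) ⇒ (ii)
    rintro ⟨U, φ, hp1, hp2, hk1, hk2, hφ1, hφ2⟩
    have hKe : ∀ g : G, (g, (1 : H)) ∈ U ↔ g ∈ K := by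
      intro g
      rw [← hk1]
      exact Iff.rfl
    have hLe : ∀ h : H, ((1 : G), h) ∈ U ↔ h ∈ L := by
      intro h
      rw [← hk2]
      exact Iff.rfl
    have hex : ∀ h : H, ∃ g : G, (g, h) ∈ U := by
      intro h
      have hmem : h ∈ p2 U := by rw [hp2]; trivial
      obtain ⟨p, hpU, hpe⟩ := Subgroup.mem_map.mp hmem
      refine ⟨p.1, ?_⟩
      have : p = (p.1, h) := by
        rw [← hpe]
        rfl
      rwa [this] at hpU
    choose gof hgof using hex
    have hmemU : ∀ (g : G) (h : H),
        (g, h) ∈ U ↔ (QuotientGroup.mk g : G ⧸ K) = QuotientGroup.mk (gof h) := by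
      intro g h
      constructor
      · intro hgh
        have h1 : (g * (gof h)⁻¹, (1 : H)) ∈ U := by
          have := mul_mem hgh (inv_mem (hgof h))
          simpa using this
        have h2 : g * (gof h)⁻¹ ∈ K := (hKe _).mp h1
        exact QuotientGroup.eq_iff_div_mem.mpr (by rwa [div_eq_mul_inv])
      · intro hq
        have h5 : (gof h)⁻¹ * g ∈ K := QuotientGroup.eq.mp hq.symm
        have := mul_mem (hgof h) ((hKe _).mpr h5)
        simpa using this
    have θmul : ∀ h h' : H, (QuotientGroup.mk (gof (h * h')) : G ⧸ K)
        = QuotientGroup.mk (gof h) * QuotientGroup.mk (gof h') := by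
      intro h h'
      have hm : (gof h * gof h', h * h') ∈ U := mul_mem (hgof h) (hgof h')
      have := (hmemU _ _).mp hm
      rw [← this, QuotientGroup.mk_mul]
    have θL : ∀ l ∈ L, (QuotientGroup.mk (gof l) : G ⧸ K) = 1 := by
      intro l hl
      have : ((1 : G), l) ∈ U := (hLe _).mpr hl
      have h2 := (hmemU _ _).mp this
      rw [← h2, QuotientGroup.mk_one]
    have hexiso : ∃ η : (H ⧸ L) ≃* (G ⧸ K), ∀ (g : G) (h : H), (g, h) ∈ U →
        η (QuotientGroup.mk h) = QuotientGroup.mk g := by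
      let θ : H →* G ⧸ K := MonoidHom.mk' (fun h => QuotientGroup.mk (gof h)) θmul
      have hθker : L ≤ θ.ker := fun l hl => θL l hl
      let η0 : H ⧸ L →* G ⧸ K := QuotientGroup.lift L θ hθker
      have hη0 : ∀ h : H, η0 (QuotientGroup.mk h) = QuotientGroup.mk (gof h) :=
        fun h => rfl
      have hinj : Function.Injective η0 := by
        rw [injective_iff_map_eq_one]
        intro q hq
        induction q using QuotientGroup.induction_on with
        | H h =>
          rw [hη0] at hq
          have h2 : gof h ∈ K := (QuotientGroup.eq_one_iff _).mp hq
          have h3 : (gof h, (1 : H)) ∈ U := (hKe _).mpr h2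
          have h4 : ((1 : G), h) ∈ U := by
            have := mul_mem (inv_mem h3) (hgof h)
            simpa using this
          exact (QuotientGroup.eq_one_iff _).mpr ((hLe _).mp h4)
      have hsurj : Function.Surjective η0 := by
        intro x
        induction x using QuotientGroup.induction_on with
        | H g =>
          have hmem : g ∈ p1 U := by rw [hp1]; trivial
          obtain ⟨p, hpU, hpe⟩ := Subgroup.mem_map.mp hmem
          have hpU' : (g, p.2) ∈ U := by
            have : p = (g, p.2) := by rw [← hpe]; rfl
            rwa [this] at hpU
          exact ⟨QuotientGroup.mk p.2, ((hmemU _ _).mp hpU').symm⟩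
      refine ⟨MulEquiv.ofBijective η0 ⟨hinj, hsurj⟩, ?_⟩
      intro g h hu
      have : (MulEquiv.ofBijective η0 ⟨hinj, hsurj⟩) (QuotientGroup.mk h)
          = η0 (QuotientGroup.mk h) := rfl
      rw [this, hη0, ← (hmemU g h).mp hu]
    obtain ⟨η, hηmk⟩ := hexiso
    have hsymm : ∀ (g : G) (h : H), (g, h) ∈ U →
        η.symm (QuotientGroup.mk g) = QuotientGroup.mk h := by
      intro g h hu
      rw [← hηmk g h hu, MulEquiv.symm_apply_apply]
    have hu : ∀ x : G ⧸ K, (σ x, τ (η.symm x)) ∈ U := by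
      intro x
      refine (hmemU _ _).mpr ?_
      rw [hσ1, ← hηmk _ _ (hgof (τ (η.symm x))), hτ1, MulEquiv.apply_symm_apply]
    refine ⟨η, fun x => φ ⟨(σ x, τ (η.symm x)), hu x⟩, ?_, ?_⟩
    · intro x
      exact φ.isOfFinOrder (isOfFinOrder_of_finite _)
    · intro x y
      set y1 := η.symm x
      set y2 := η.symm y
      have hc1 : ((α x y : G), (1 : H)) ∈ U := (hKe _).mpr (α x y).2
      have hc2 : ((1 : G), (β y1 y2 : H)) ∈ U := (hLe _).mpr (β y1 y2).2
      have hc : ((α x y : G), (β y1 y2 : H)) ∈ U := by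
        have := mul_mem hc1 hc2
        simpa using this
      have habcd : (⟨(σ x, τ y1), hu x⟩ : U) * ⟨(σ y, τ y2), hu y⟩
          = (⟨((α x y : G), (β y1 y2 : H)), hc⟩ : U) * ⟨(σ (x * y), τ (η.symm (x * y))), hu (x * y)⟩ := by
        apply Subtype.ext
        apply Prod.ext
        · exact hσ2 x y
        · show τ y1 * τ y2 = (β y1 y2 : H) * τ (η.symm (x * y))
          rw [map_mul η.symm x y, hτ2]
      have hcsplit : (⟨((α x y : G), (β y1 y2 : H)), hc⟩ : U)
          = (⟨((α x y : G), (1 : H)), hc1⟩ : U) * ⟨((1 : G), (β y1 y2 : H)), hc2⟩ := by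
        apply Subtype.ext
        apply Prod.ext <;> simp
      have hφc1 : φ ⟨((α x y : G), (1 : H)), hc1⟩ = κ (α x y) := by
        rw [hφ1 _ (α x y).2 hc1]
      have hφc2 : φ ⟨((1 : G), (β y1 y2 : H)), hc2⟩ = (lam (β y1 y2))⁻¹ := by
        rw [← hφ2 _ (β y1 y2).2 hc2, inv_inv]
      have h1 : φ ⟨(σ x, τ y1), hu x⟩ * φ ⟨(σ y, τ y2), hu y⟩
          = κ (α x y) * (lam (β y1 y2))⁻¹ * φ ⟨(σ (x * y), τ (η.symm (x * y))), hu (x * y)⟩ := by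
        rw [← map_mul, habcd, map_mul, hcsplit, map_mul, hφc1, hφc2]
      calc (κ (α x y) : A)
          = lam (β y1 y2) * (φ ⟨(σ x, τ y1), hu x⟩ * φ ⟨(σ y, τ y2), hu y⟩)
            * (φ ⟨(σ (x * y), τ (η.symm (x * y))), hu (x * y)⟩)⁻¹ := by
            rw [h1]
            simp [mul_comm, mul_left_comm, mul_assoc]
        _ = lam (β y1 y2) * φ ⟨(σ x, τ y1), hu x⟩ * φ ⟨(σ y, τ y2), hu y⟩
            * (φ ⟨(σ (x * y), τ (η.symm (x * y))), hu (x * y)⟩)⁻¹ := by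
            simp only [mul_assoc]
  · -- (ii) ⇒ (i)
    rintro ⟨η, μ, hμtor, hrel⟩
    have hrel11 : (κ (α 1 1) : A) = lam (β 1 1) * μ 1 := by
      have h := hrel 1 1
      rw [mul_one] at h
      simp only [map_one] at h
      rw [h]
      simp [mul_assoc]
    -- the subgroup
    let U : Subgroup (G × H) :=
      { carrier := {p : G × H | (QuotientGroup.mk p.1 : G ⧸ K) = η (QuotientGroup.mk p.2)}
        one_mem' := by simp
        mul_mem' := by
          intro a b ha hb
          simp only [Set.mem_setOf_eq] at *
          calc (QuotientGroup.mk (a * b).1 : G ⧸ K)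
              = QuotientGroup.mk a.1 * QuotientGroup.mk b.1 := rfl
            _ = η (QuotientGroup.mk a.2) * η (QuotientGroup.mk b.2) := by rw [ha, hb]
            _ = η (QuotientGroup.mk (a * b).2) := by rw [← map_mul]; rfl
        inv_mem' := by
          intro a ha
          simp only [Set.mem_setOf_eq] at *
          calc (QuotientGroup.mk (a⁻¹).1 : G ⧸ K)
              = (QuotientGroup.mk a.1)⁻¹ := rfl
            _ = (η (QuotientGroup.mk a.2))⁻¹ := by rw [ha]
            _ = η (QuotientGroup.mk (a⁻¹).2) := by rw [← map_inv]; rfl }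
    have hUmem : ∀ p : G × H,
        p ∈ U ↔ (QuotientGroup.mk p.1 : G ⧸ K) = η (QuotientGroup.mk p.2) :=
      fun _ => Iff.rfl
    let φ : U →* A := MonoidHom.mk'
      (fun p => linkF K L κ lam σ τ μ hσ1 hτ1 p.1.1 p.1.2)
      (by
        rintro ⟨⟨g, h⟩, hp⟩ ⟨⟨g', h'⟩, hq⟩
        have e1 : (QuotientGroup.mk g : G ⧸ K) = η (QuotientGroup.mk h) := hp
        have e2 : (QuotientGroup.mk g' : G ⧸ K) = η (QuotientGroup.mk h') := hq
        exact linkF_mul K L κ lam α β σ τ μ hσ1 hτ1 hσ2 hτ2 hKc hLc η hrel g g' h h'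
          (by rw [e1, MulEquiv.symm_apply_apply])
          (by rw [e2, MulEquiv.symm_apply_apply]))
    refine ⟨U, φ, ?_, ?_, ?_, ?_, ?_, ?_⟩
    · -- p1 U = ⊤
      rw [eq_top_iff]
      rintro g -
      obtain ⟨h, hh⟩ := QuotientGroup.mk_surjective (η.symm (QuotientGroup.mk g))
      refine Subgroup.mem_map.mpr ⟨(g, h), ?_, rfl⟩
      refine (hUmem _).mpr ?_
      rw [hh, MulEquiv.apply_symm_apply]
    · -- p2 U = ⊤
      rw [eq_top_iff]
      rintro h -
      obtain ⟨g, hg⟩ := QuotientGroup.mk_surjective (η (QuotientGroup.mk h))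
      exact Subgroup.mem_map.mpr ⟨(g, h), (hUmem _).mpr hg, rfl⟩
    · -- k1 U = K
      ext g
      rw [k1, Subgroup.mem_comap]
      have : (MonoidHom.inl G H g ∈ U) ↔
          ((QuotientGroup.mk g : G ⧸ K) = η (QuotientGroup.mk (1 : H))) := Iff.rfl
      rw [this, QuotientGroup.mk_one, map_one, QuotientGroup.eq_one_iff]
    · -- k2 U = L
      ext h
      rw [k2, Subgroup.mem_comap]
      have : (MonoidHom.inr G H h ∈ U) ↔
          ((QuotientGroup.mk (1 : G) : G ⧸ K) = η (QuotientGroup.mk h)) := Iff.rfl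
      rw [this, QuotientGroup.mk_one]
      constructor
      · intro he
        have : (QuotientGroup.mk h : H ⧸ L) = 1 := by
          apply η.injective
          rw [← he, map_one]
        exact (QuotientGroup.eq_one_iff _).mp this
      · intro hl
        rw [(QuotientGroup.eq_one_iff _).mpr hl, map_one]
    · -- φ on K × 1
      intro g hg hu
      exact linkF_left K L κ lam α β σ τ μ hσ1 hτ1 hσ1K hτ1L hrel11 g hg
    · -- φ on 1 × L
      intro h hh hu
      exact linkF_right K L κ lam α β σ τ μ hσ1 hτ1 hσ1K hτ1L hrel11 h hh
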